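/- arXiv:alg-geom/9506007 — 4 statements merged into one kernel-verified Lean document; each statement's English description precedes it below -/
import Mathlib

section
/- Let N ≥ 1, let β : {1,…,N} → ℤ take only nonzero values, let r : {1,…,N} → ℕ take only positive values, let μ ∈ ℤ, and set n_+ = Σ_{j : β_j > 0} r_j β_j. If μ + n_+ > 0, then for every ε with 0 < ε < 1, ∮_{|t|=ε} t^{μ−1} · ∏_{j=1}^N (1 − t^{−β_j})^{−r_j} dt = 0. -/
open Metric Set

private lemma zpow_sum_aux {t : ℂ} (ht : t ≠ 0) {ι : Type*} (s : Finset ι) (f : ι → ℤ) :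
    t ^ (∑ i ∈ s, f i) = ∏ i ∈ s, t ^ f i := by
  classical
  induction s using Finset.induction with
  | empty => simp
  | insert a s hx ih =>
    rw [Finset.sum_insert hx, Finset.prod_insert hx, zpow_add₀ ht, ih]

/-- With nonzero integer weights `β j`, positive multiplicities `r j`,
`μ ∈ ℤ` and `nP = ∑_{j : β j > 0} r j * β j`, if `μ + nP > 0` then for every `0 < ε < 1`
the circle integral `∮_{|t|=ε} t^(μ-1) ∏ j (1 - t^(-β j))^(-r j) dt` vanishes. -/
theorem stmt5 (N : ℕ) (hN : 1 ≤ N) (β : Fin N → ℤ) (hβ : ∀ j, β j ≠ 0)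
    (r : Fin N → ℕ) (hr : ∀ j, 0 < r j) (μ : ℤ)
    (h : 0 < μ + ∑ j ∈ Finset.univ.filter (fun j => 0 < β j), (r j : ℤ) * β j) :
    ∀ ε : ℝ, 0 < ε → ε < 1 →
      (∮ t in C(0, ε), t ^ (μ - 1) * ∏ j, ((1 - t ^ (-β j))⁻¹) ^ (r j)) = 0 := by
  intro ε hε hε1
  classical
  set S : Finset (Fin N) := Finset.univ.filter (fun j => 0 < β j) with hS
  set nP : ℤ := ∑ j ∈ S, (r j : ℤ) * β j with hnP
  have hnn : 0 ≤ μ - 1 + nP := by omega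
  set m : ℕ := (μ - 1 + nP).toNat with hm
  have hmz : (m : ℤ) = μ - 1 + nP := Int.toNat_of_nonneg hnn
  -- the holomorphic extension
  set v : Fin N → ℂ → ℂ := fun j t =>
    if 0 < β j then ((t ^ (β j).toNat - 1)⁻¹) ^ r j
    else ((1 - t ^ (-β j).toNat)⁻¹) ^ r j with hv
  set F : ℂ → ℂ := fun t => t ^ m * ∏ j, v j t with hF
  -- for |t| < 1, t^k ≠ 1 for k ≥ 1
  have hne : ∀ t : ℂ, ‖t‖ < 1 → ∀ k : ℕ, 0 < k → t ^ k ≠ 1 := by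
    intro t ht k hk heq
    have : ‖t ^ k‖ < 1 := by
      rw [norm_pow]
      exact pow_lt_one₀ (norm_nonneg t) ht hk.ne'
    rw [heq] at this; simp at this
  -- F is differentiable on ball 0 1
  have hFd : ∀ t ∈ ball (0 : ℂ) 1, DifferentiableAt ℂ F t := by
    intro t ht
    simp only [mem_ball, dist_zero_right] at ht
    apply DifferentiableAt.mul (differentiableAt_pow m)
    apply DifferentiableAt.fun_finsetProd
    intro j _
    by_cases hj : 0 < β j
    · simp only [hv, if_pos hj]
      apply DifferentiableAt.pow
      apply DifferentiableAt.inv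
      · exact (differentiableAt_pow _).sub_const 1
      · intro h0
        exact hne t ht (β j).toNat (by omega) (by linear_combination h0)
    · simp only [hv, if_neg hj]
      apply DifferentiableAt.pow
      apply DifferentiableAt.inv
      · exact (differentiableAt_const 1).sub (differentiableAt_pow _)
      · intro h0
        have := hne t ht (-β j).toNat (by have := hβ j; omega)
        apply this
        linear_combination -h0
  have hsub : closedBall (0 : ℂ) ε ⊆ ball 0 1 := by
    intro z hz
    simp only [mem_closedBall, mem_ball, dist_zero_right] at hz ⊢
    linarith
  -- the integrand equals F on the sphere
  have heq : EqOn (fun t : ℂ => t ^ (μ - 1) * ∏ j, ((1 - t ^ (-β j))⁻¹) ^ (r j)) F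
      (sphere (0 : ℂ) ε) := by
    intro t hts
    simp only [mem_sphere, dist_zero_right] at hts
    have ht0 : t ≠ 0 := by
      intro h0; rw [h0, norm_zero] at hts; linarith
    have ht1 : ‖t‖ < 1 := by rw [hts]; exact hε1
    have key : ∀ j, ((1 - t ^ (-β j))⁻¹) ^ (r j)
        = (if 0 < β j then t ^ ((r j : ℤ) * β j) else 1) * v j t := by
      intro j
      by_cases hj : 0 < β j
      · simp only [hv, if_pos hj]
        have hb : t ^ (β j) = t ^ (β j).toNat := by
          rw [← zpow_natCast, Int.toNat_of_nonneg hj.le]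
        have hb1 : t ^ (β j).toNat - 1 ≠ 0 := by
          intro h0
          exact hne t ht1 (β j).toNat (by omega) (by linear_combination h0)
        have hbne : t ^ (β j).toNat ≠ 0 := pow_ne_zero _ ht0
        have : 1 - t ^ (-β j) = (t ^ (β j).toNat - 1) * (t ^ (β j).toNat)⁻¹ := by
          rw [zpow_neg, hb]
          field_simp
        rw [this, mul_inv, inv_inv, mul_pow, ← pow_mul, ← zpow_natCast t (β j).toNat,
          ← zpow_natCast t ((β j).toNat * r j), mul_comm]
        congr 2
        push_cast
        rw [Int.toNat_of_nonneg hj.le]; ring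
      · simp only [hv, if_neg hj, one_mul]
        congr 2
        rw [← zpow_natCast t (-β j).toNat, Int.toNat_of_nonneg (by have := hβ j; omega)]
    dsimp only
    rw [Finset.prod_congr rfl (fun j _ => key j), Finset.prod_mul_distrib]
    have hprod : (∏ j, if 0 < β j then t ^ ((r j : ℤ) * β j) else 1) = t ^ nP := by
      rw [hnP, zpow_sum_aux ht0, ← Finset.prod_filter]
    rw [hprod, hF, ← mul_assoc]
    congr 1
    rw [← zpow_add₀ ht0, ← hmz, zpow_natCast]
  rw [circleIntegral.integral_congr hε.le heq]
  exact Complex.circleIntegral_eq_zero_of_differentiable_on_off_countable hε.le Set.countable_empty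
    (fun z hz => (hFd z (hsub hz)).continuousAt.continuousWithinAt)
    (fun z hz => hFd z (ball_subset_ball hε1.le hz.1))
end

section
/- Let N ≥ 1, let β : {1,…,N} → ℤ take only nonzero values, let r : {1,…,N} → ℕ take only positive values, let μ ∈ ℤ, and set n_− = Σ_{j : β_j < 0} r_j (−β_j). If μ < n_−, then for every R > 1, ∮_{|t|=R} t^{μ−1} · ∏_{j=1}^N (1 − t^{−β_j})^{−r_j} dt = 0. -/
open Finset Filter

private lemma zpow_sum_aux_s6 {S : ℝ} (hS : S ≠ 0) {α : Type*} (s : Finset α) (e : α → ℤ) :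
    S ^ (∑ j ∈ s, e j) = ∏ j ∈ s, S ^ (e j) := by
  classical
  induction s using Finset.cons_induction with
  | empty => simp
  | cons a s ha ih => rw [Finset.sum_cons, Finset.prod_cons, zpow_add₀ hS, ih]

/-- With nonzero integer weights `β j`, positive multiplicities `r j`,
`μ ∈ ℤ` and `n₋ = ∑_{j : β j < 0} r j * (-β j)`, if `μ < n₋` then for every `R > 1`
the circle integral `∮_{|t|=R} t^(μ-1) ∏ j (1 - t^(-β j))^(-r j) dt` vanishes. -/
theorem stmt6 (N : ℕ) (hN : 1 ≤ N) (β : Fin N → ℤ) (hβ : ∀ j, β j ≠ 0)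
    (r : Fin N → ℕ) (hr : ∀ j, 0 < r j) (μ : ℤ)
    (h : μ < ∑ j ∈ Finset.univ.filter (fun j => β j < 0), (r j : ℤ) * (-β j)) :
    ∀ R : ℝ, 1 < R →
      (∮ t in C(0, R), t ^ (μ - 1) * ∏ j, ((1 - t ^ (-β j))⁻¹) ^ (r j)) = 0 := by
  classical
  intro R hR
  set n : ℤ := ∑ j ∈ Finset.univ.filter (fun j => β j < 0), (r j : ℤ) * (-β j) with hn
  set f : ℂ → ℂ := fun t => t ^ (μ - 1) * ∏ j, ((1 - t ^ (-β j))⁻¹) ^ (r j) with hfdef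
  -- The denominators do not vanish for ‖z‖ > 1
  have hne : ∀ z : ℂ, 1 < ‖z‖ → ∀ j, 1 - z ^ (-β j) ≠ 0 := by
    intro z hz j hc
    have hz1 : z ^ (-β j) = 1 := by
      have := sub_eq_zero.mp hc
      exact this.symm
    have hnorm : ‖z‖ ^ (-β j) = ‖z‖ ^ (0 : ℤ) := by
      rw [← norm_zpow, hz1, norm_one, zpow_zero]
    have h0 : (0 : ℝ) < ‖z‖ := lt_trans one_pos hz
    have := zpow_right_injective₀ h0 (ne_of_gt hz) hnorm
    simp only [neg_eq_zero] at this
    exact hβ j this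
  -- Differentiability away from the closed unit disc
  have hdiff : ∀ z : ℂ, 1 < ‖z‖ → DifferentiableAt ℂ f z := by
    intro z hz
    have hz0 : z ≠ 0 := by
      intro hz0; rw [hz0, norm_zero] at hz; linarith
    apply DifferentiableAt.mul
    · exact differentiableAt_zpow.mpr (Or.inl hz0)
    · apply DifferentiableAt.fun_finsetProd
      intro j _
      exact (((differentiableAt_const (1 : ℂ)).sub
        (differentiableAt_zpow.mpr (Or.inl hz0))).inv (hne z hz j)).pow _
  -- The integral is independent of the radius
  have hconst : ∀ S : ℝ, R ≤ S →
      (∮ t in C(0, S), f t) = ∮ t in C(0, R), f t := by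
    intro S hS
    apply Complex.circleIntegral_eq_of_differentiable_on_annulus_off_countable
      (lt_trans one_pos hR) hS Set.countable_empty
    · intro z hz
      obtain ⟨_, hz2⟩ := hz
      have : 1 < ‖z‖ := by
        simp only [Metric.mem_ball, Complex.dist_eq, sub_zero] at hz2
        push_neg at hz2
        linarith
      exact (hdiff z this).continuousAt.continuousWithinAt
    · intro z hz
      obtain ⟨⟨_, hz2⟩, _⟩ := hz
      apply hdiff
      simp only [Metric.mem_closedBall, Complex.dist_eq, sub_zero] at hz2
      push_neg at hz2
      linarith
  set K : ℝ := 2 * Real.pi * (2 : ℝ) ^ (∑ j, r j) with hK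
  have hKpos : 0 < K := by positivity
  -- sum of the exponents
  have hsum : ∑ j, (r j : ℤ) * min (β j) 0 = -n := by
    have h1 : ∑ j ∈ Finset.univ.filter (fun j => β j < 0), (r j : ℤ) * min (β j) 0
        = ∑ j, (r j : ℤ) * min (β j) 0 :=
      Finset.sum_filter_of_ne (by
        intro j _ hne0
        by_contra hnot
        exact hne0 (by rw [min_eq_right (le_of_not_gt hnot), mul_zero]))
    rw [← h1, hn, ← Finset.sum_neg_distrib]
    apply Finset.sum_congr rfl
    intro j hj
    simp only [Finset.mem_filter] at hj
    rw [min_eq_left hj.2.le]; ring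
  -- norm bound on the sphere of radius S
  have hbound : ∀ S : ℝ, 2 ≤ S → ∀ z : ℂ, ‖z‖ = S →
      ‖f z‖ ≤ S ^ (μ - 1) * ((2 : ℝ) ^ (∑ j, r j) * S ^ (-n)) := by
    intro S hS z hzS
    have hS1 : (1 : ℝ) < S := by linarith
    have hS0 : (0 : ℝ) < S := by linarith
    have hz1 : 1 < ‖z‖ := by rw [hzS]; exact hS1
    have hfac : ∀ j, ‖((1 - z ^ (-β j))⁻¹) ^ (r j)‖ ≤ (2 * S ^ (min (β j) 0)) ^ (r j) := by
      intro j
      have key : (2 * S ^ (min (β j) 0))⁻¹ ≤ ‖1 - z ^ (-β j)‖ := by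
        rcases lt_or_gt_of_ne (hβ j) with hneg | hpos
        · -- β j < 0
          have hmin : min (β j) 0 = β j := min_eq_left hneg.le
          have hb : (1 : ℤ) ≤ -β j := by omega
          have hSb : S ≤ S ^ (-β j) := by
            calc S = S ^ (1 : ℤ) := (zpow_one S).symm
            _ ≤ S ^ (-β j) := zpow_le_zpow_right₀ hS1.le hb
          have h2Sb : 2 ≤ S ^ (-β j) := le_trans hS hSb
          have hlow : S ^ (-β j) - 1 ≤ ‖1 - z ^ (-β j)‖ := by
            calc S ^ (-β j) - 1 = ‖z ^ (-β j)‖ - ‖(1 : ℂ)‖ := by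
                  rw [norm_zpow, hzS, norm_one]
            _ ≤ ‖z ^ (-β j) - 1‖ := norm_sub_norm_le _ _
            _ = ‖1 - z ^ (-β j)‖ := norm_sub_rev _ _
          have hinv : (2 * S ^ (min (β j) 0))⁻¹ = S ^ (-β j) / 2 := by
            rw [hmin]
            rw [mul_inv, ← zpow_neg]
            field_simp
          rw [hinv]
          calc S ^ (-β j) / 2 ≤ S ^ (-β j) - 1 := by linarith
          _ ≤ _ := hlow
        · -- β j > 0
          have hmin : min (β j) 0 = 0 := min_eq_right hpos.le
          have hb : -β j ≤ -1 := by omega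
          have hSb : S ^ (-β j) ≤ S⁻¹ := by
            calc S ^ (-β j) ≤ S ^ (-1 : ℤ) := zpow_le_zpow_right₀ hS1.le hb
            _ = S⁻¹ := zpow_neg_one S
          have hhalf : S ^ (-β j) ≤ 1/2 := by
            refine le_trans hSb ?_
            rw [inv_le_comm₀ hS0 (by norm_num)]
            linarith
          have hlow : 1 - S ^ (-β j) ≤ ‖1 - z ^ (-β j)‖ := by
            calc 1 - S ^ (-β j) = ‖(1 : ℂ)‖ - ‖z ^ (-β j)‖ := by
                  rw [norm_zpow, hzS, norm_one]
            _ ≤ ‖1 - z ^ (-β j)‖ := norm_sub_norm_le _ _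
          rw [hmin, zpow_zero, mul_one]
          calc (2 : ℝ)⁻¹ ≤ 1 - S ^ (-β j) := by
                rw [inv_eq_one_div]; linarith
          _ ≤ _ := hlow
      have hpos2 : (0 : ℝ) < (2 * S ^ (min (β j) 0))⁻¹ := by positivity
      have : ‖(1 - z ^ (-β j))⁻¹‖ ≤ 2 * S ^ (min (β j) 0) := by
        rw [norm_inv]
        calc ‖1 - z ^ (-β j)‖⁻¹ ≤ ((2 * S ^ (min (β j) 0))⁻¹)⁻¹ :=
              inv_anti₀ hpos2 key
        _ = 2 * S ^ (min (β j) 0) := inv_inv _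
      calc ‖((1 - z ^ (-β j))⁻¹) ^ (r j)‖ = ‖(1 - z ^ (-β j))⁻¹‖ ^ (r j) := norm_pow _ _
      _ ≤ (2 * S ^ (min (β j) 0)) ^ (r j) :=
            pow_le_pow_left₀ (norm_nonneg _) this _
    have hprod : ‖∏ j, ((1 - z ^ (-β j))⁻¹) ^ (r j)‖ ≤
        (2 : ℝ) ^ (∑ j, r j) * S ^ (-n) := by
      calc ‖∏ j, ((1 - z ^ (-β j))⁻¹) ^ (r j)‖
          = ∏ j, ‖((1 - z ^ (-β j))⁻¹) ^ (r j)‖ := norm_prod _ _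
      _ ≤ ∏ j, (2 * S ^ (min (β j) 0)) ^ (r j) :=
            Finset.prod_le_prod (fun j _ => norm_nonneg _) (fun j _ => hfac j)
      _ = (2 : ℝ) ^ (∑ j, r j) * S ^ (-n) := by
            have : ∀ j : Fin N, (2 * S ^ (min (β j) 0)) ^ (r j)
                = 2 ^ (r j) * S ^ (min (β j) 0 * (r j : ℤ)) := by
              intro j
              rw [mul_pow, zpow_mul, zpow_natCast]
            rw [Finset.prod_congr rfl (fun j _ => this j), Finset.prod_mul_distrib,
              ← Finset.prod_pow_eq_pow_sum, ← zpow_sum_aux_s6 (ne_of_gt hS0)]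
            congr 1
            rw [← hsum]
            congr 1
            apply Finset.sum_congr rfl
            intro j _
            ring
    calc ‖f z‖ = ‖z ^ (μ - 1)‖ * ‖∏ j, ((1 - z ^ (-β j))⁻¹) ^ (r j)‖ := norm_mul _ _
    _ = S ^ (μ - 1) * ‖∏ j, ((1 - z ^ (-β j))⁻¹) ^ (r j)‖ := by rw [norm_zpow, hzS]
    _ ≤ S ^ (μ - 1) * ((2 : ℝ) ^ (∑ j, r j) * S ^ (-n)) := by
          apply mul_le_mul_of_nonneg_left hprod
          positivity
  -- The integral is bounded by K / S for every large S
  have hIle : ∀ S : ℝ, max R 2 ≤ S → ‖∮ t in C(0, R), f t‖ ≤ K / S := by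
    intro S hS
    have hSR : R ≤ S := le_trans (le_max_left _ _) hS
    have hS2 : (2 : ℝ) ≤ S := le_trans (le_max_right _ _) hS
    have hS0 : (0 : ℝ) < S := by linarith
    rw [← hconst S hSR]
    have hb : ∀ z ∈ Metric.sphere (0 : ℂ) S, ‖f z‖ ≤
        S ^ (μ - 1) * ((2 : ℝ) ^ (∑ j, r j) * S ^ (-n)) := by
      intro z hz
      simp only [Metric.mem_sphere, Complex.dist_eq, sub_zero] at hz
      exact hbound S hS2 z hz
    calc ‖∮ t in C(0, S), f t‖
        ≤ 2 * Real.pi * S * (S ^ (μ - 1) * ((2 : ℝ) ^ (∑ j, r j) * S ^ (-n))) :=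
          circleIntegral.norm_integral_le_of_norm_le_const hS0.le hb
    _ = K * S ^ (μ - n) := by
          rw [hK, show μ - n = 1 + (μ - 1) + (-n) by ring,
            zpow_add₀ (ne_of_gt hS0), zpow_add₀ (ne_of_gt hS0), zpow_one]
          ring
    _ ≤ K * S ^ (-1 : ℤ) := by
          apply mul_le_mul_of_nonneg_left _ hKpos.le
          apply zpow_le_zpow_right₀ (by linarith : (1:ℝ) ≤ S)
          omega
    _ = K / S := by rw [zpow_neg_one]; rw [div_eq_mul_inv]
  -- conclude by letting S → ∞
  have htend : Tendsto (fun S : ℝ => K / S) atTop (nhds 0) := by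
    simpa [div_eq_mul_inv] using tendsto_inv_atTop_zero.const_mul K
  have hle0 : ‖∮ t in C(0, R), f t‖ ≤ 0 := by
    refine ge_of_tendsto htend ?_
    filter_upwards [eventually_ge_atTop (max R 2)] with S hS
    exact hIle S hS
  exact norm_le_zero_iff.mp hle0
end

section
/- Let φ be a formal power series over ℂ with zero constant coefficient and nonzero coefficient of x, let g be a formal power series over ℂ in the variable u, and let k ≥ 1 be an integer. Regard the substitution g∘φ (substituting φ into g), the formal derivative φ′, and φ itself as elements of the field ℂ((x)) of formal Laurent series, where φ is nonzero of order 1 so that φ^{−k} is defined. Then the coefficient of x^{−1} in (g∘φ) · φ′ · φ^{−k} equals the coefficient of u^{k−1} in g. -/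
/-- Substitution of a formal power series `φ` with zero constant coefficient into a formal
power series `g` : the coefficient of `x^n` in `g ∘ φ = ∑_k (coeff k g) • φ^k` is
`∑_{k ≤ n} (coeff k g) * coeff n (φ^k)` (the terms with `k > n` do not contribute since
`φ` has zero constant coefficient). -/
noncomputable def substInto (φ g : PowerSeries ℂ) : PowerSeries ℂ :=
  PowerSeries.mk fun n =>
    ∑ k ∈ Finset.range (n + 1), PowerSeries.coeff k g * PowerSeries.coeff n (φ ^ k)

namespace Stmt9Aux

open PowerSeries

local notation "dd" => PowerSeries.derivative ℂ

lemma key_id (ψ w : PowerSeries ℂ) (hw : ψ * w = 1) (i j : ℕ) :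
    ψ ^ i * (ψ + PowerSeries.X * dd ψ) * w ^ (i + j + 2)
      = w ^ (j + 1) - PowerSeries.X * (w ^ j * dd w) := by
  have h1 : ψ ^ (i+1) * w ^ (i+1) = 1 := by rw [← mul_pow, hw, one_pow]
  have h2 : ψ ^ i * w ^ i = 1 := by rw [← mul_pow, hw, one_pow]
  have hd : ψ * dd w + w * dd ψ = 0 := by
    have h := congrArg (dd) hw
    rwa [Derivation.leibniz, Derivation.map_one_eq_zero, smul_eq_mul, smul_eq_mul] at h
  linear_combination (w ^ (j+1)) * h1 + (PowerSeries.X * dd ψ * w ^ (j+2)) * h2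
    + (PowerSeries.X * w ^ (j+1)) * hd - (PowerSeries.X * w ^ j * dd w) * hw

lemma coeff_pow_deriv (w : PowerSeries ℂ) (j : ℕ) :
    PowerSeries.coeff j (w ^ j * dd w) = PowerSeries.coeff (j+1) (w ^ (j+1)) := by
  have h := Derivation.leibniz_pow (dd) (a := w) (j+1)
  have h2 := congrArg (PowerSeries.coeff j) h
  rw [PowerSeries.coeff_derivative, Nat.add_sub_cancel, smul_eq_mul, map_nsmul,
    nsmul_eq_mul] at h2
  have hne : ((j : ℂ) + 1) ≠ 0 := Nat.cast_add_one_ne_zero j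
  apply mul_left_cancel₀ hne
  push_cast at h2 ⊢
  linear_combination -h2

lemma coeff_zero_case (ψ w : PowerSeries ℂ) (hw : ψ * w = 1) (i : ℕ) :
    PowerSeries.coeff 0 (ψ ^ i * (ψ + PowerSeries.X * dd ψ) * w ^ (i+1)) = 1 := by
  have h1 : ψ ^ (i+1) * w ^ (i+1) = 1 := by rw [← mul_pow, hw, one_pow]
  have hid : ψ ^ i * (ψ + PowerSeries.X * dd ψ) * w ^ (i+1)
      = 1 + PowerSeries.X * (ψ ^ i * dd ψ * w ^ (i+1)) := by
    linear_combination h1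
  rw [hid]
  simp [PowerSeries.coeff_zero_eq_constantCoeff_apply]

lemma main_ps (φ ψ w g : PowerSeries ℂ) (hφ : φ = PowerSeries.X * ψ) (hw : ψ * w = 1)
    (k : ℕ) (hk : 1 ≤ k) :
    PowerSeries.coeff (k-1) (substInto φ g * dd φ * w ^ k)
      = PowerSeries.coeff (k-1) g := by
  have hdφ : dd φ = ψ + PowerSeries.X * dd ψ := by
    rw [hφ, Derivation.leibniz, PowerSeries.derivative_X, smul_eq_mul, smul_eq_mul]
    ring
  -- residue of the monomial pieces
  have R : ∀ i < k, PowerSeries.coeff (k-1) (φ ^ i * dd φ * w ^ k)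
      = if i = k - 1 then 1 else 0 := by
    intro i hi
    have hrw : φ ^ i * dd φ * w ^ k
        = PowerSeries.X ^ i * (ψ ^ i * (ψ + PowerSeries.X * dd ψ) * w ^ k) := by
      rw [hdφ, hφ, mul_pow]; ring
    rw [hrw]
    by_cases hcase : i = k - 1
    · rw [if_pos hcase]
      obtain rfl : k = i + 1 := by omega
      have h := PowerSeries.coeff_X_pow_mul
        (ψ ^ i * (ψ + PowerSeries.X * dd ψ) * w ^ (i + 1)) i 0
      rw [zero_add] at h
      rw [Nat.add_sub_cancel, h]
      exact coeff_zero_case ψ w hw i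
    · rw [if_neg hcase]
      obtain ⟨j, rfl⟩ : ∃ j, k = i + j + 2 := ⟨k - i - 2, by omega⟩
      have h := PowerSeries.coeff_X_pow_mul
        (ψ ^ i * (ψ + PowerSeries.X * dd ψ) * w ^ (i + j + 2)) i (j + 1)
      rw [show (j + 1) + i = i + j + 2 - 1 from by omega] at h
      rw [h, key_id ψ w hw i j, map_sub,
        mul_comm PowerSeries.X, PowerSeries.coeff_succ_mul_X, coeff_pow_deriv, sub_self]
  set S : PowerSeries ℂ := ∑ i ∈ Finset.range k, (PowerSeries.coeff i g) • φ ^ i with hS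
  have hcoeffs : ∀ j < k, PowerSeries.coeff j (substInto φ g) = PowerSeries.coeff j S := by
    intro j hj
    rw [substInto, PowerSeries.coeff_mk, hS, map_sum]
    simp only [map_smul, smul_eq_mul]
    apply Finset.sum_subset
    · intro i hi
      simp only [Finset.mem_range] at hi ⊢
      omega
    · intro i hi hni
      simp only [Finset.mem_range] at hi hni
      have hz : PowerSeries.coeff j (φ ^ i) = 0 := by
        have hdvd : (PowerSeries.X : PowerSeries ℂ) ^ i ∣ φ ^ i := by
          rw [hφ, mul_pow]; exact dvd_mul_right _ _
        exact (PowerSeries.X_pow_dvd_iff.mp hdvd) j (by omega)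
      rw [hz, mul_zero]
  have hsub : PowerSeries.coeff (k-1) (substInto φ g * dd φ * w ^ k)
      = PowerSeries.coeff (k-1) (S * dd φ * w ^ k) := by
    rw [mul_assoc, mul_assoc, PowerSeries.coeff_mul, PowerSeries.coeff_mul]
    refine Finset.sum_congr rfl fun p hp => ?_
    rw [hcoeffs p.1 (by have := Finset.HasAntidiagonal.mem_antidiagonal.mp hp; omega)]
  rw [hsub, hS, Finset.sum_mul, Finset.sum_mul, map_sum]
  simp only [smul_mul_assoc, map_smul, smul_eq_mul]
  rw [Finset.sum_eq_single (k-1)]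
  · rw [R (k-1) (by omega), if_pos rfl, mul_one]
  · intro i hi hne
    rw [R i (Finset.mem_range.mp hi), if_neg hne, mul_zero]
  · intro h
    exact absurd (Finset.mem_range.mpr (by omega)) h

end Stmt9Aux

/-- (Invariance of the formal residue under change of coordinate.)
If `φ ∈ ℂ⟦x⟧` has zero constant coefficient and nonzero coefficient of `x`, `g ∈ ℂ⟦u⟧`, and
`k ≥ 1`, then, in the field `ℂ((x))` of formal Laurent series, the coefficient of `x^(-1)` in
`(g ∘ φ) · φ' · φ^(-k)` equals the coefficient of `u^(k-1)` in `g`. -/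
theorem stmt9 (φ g : PowerSeries ℂ)
    (hφ0 : PowerSeries.constantCoeff φ = 0)
    (hφ1 : PowerSeries.coeff 1 φ ≠ 0) (k : ℕ) (hk : 1 ≤ k) :
    HahnSeries.coeff
      (((substInto φ g : PowerSeries ℂ) : LaurentSeries ℂ) *
        ((PowerSeries.derivative ℂ φ : PowerSeries ℂ) : LaurentSeries ℂ) *
        ((φ : PowerSeries ℂ) : LaurentSeries ℂ) ^ (-(k : ℤ)))
      (-1) = PowerSeries.coeff (k - 1) g := by
  obtain ⟨ψ, hφ⟩ : ∃ ψ, φ = PowerSeries.X * ψ := PowerSeries.X_dvd_iff.mpr hφ0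
  have hψ0 : PowerSeries.constantCoeff ψ ≠ 0 := by
    intro h
    apply hφ1
    rw [hφ]
    have := PowerSeries.coeff_X_pow_mul ψ 1 0
    simp [PowerSeries.coeff_zero_eq_constantCoeff_apply, h]
  set w : PowerSeries ℂ := ψ⁻¹ with hwdef
  have hw : ψ * w = 1 := PowerSeries.mul_inv_cancel ψ hψ0
  have hψw : ((ψ : PowerSeries ℂ) : LaurentSeries ℂ) * (w : LaurentSeries ℂ) = 1 := by
    rw [← PowerSeries.coe_mul, hw, PowerSeries.coe_one]
  have hone : (HahnSeries.single (1:ℤ) (1:ℂ)) * HahnSeries.single (-1:ℤ) 1 = 1 := by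
    rw [HahnSeries.single_mul_single, add_neg_cancel, mul_one, HahnSeries.single_zero_one]
  have hunit : ((φ : PowerSeries ℂ) : LaurentSeries ℂ) *
      (HahnSeries.single (-1 : ℤ) 1 * (w : LaurentSeries ℂ)) = 1 := by
    rw [hφ, PowerSeries.coe_mul, PowerSeries.coe_X]
    calc (HahnSeries.single (1:ℤ) (1:ℂ) * (ψ : LaurentSeries ℂ)) *
          (HahnSeries.single (-1 : ℤ) 1 * (w : LaurentSeries ℂ))
        = (HahnSeries.single (1:ℤ) (1:ℂ) * HahnSeries.single (-1:ℤ) 1) *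
          ((ψ : LaurentSeries ℂ) * (w : LaurentSeries ℂ)) := by ring
      _ = 1 := by rw [hone, hψw, one_mul]
  have hinv : (((φ : PowerSeries ℂ) : LaurentSeries ℂ))⁻¹
      = HahnSeries.single (-1 : ℤ) 1 * (w : LaurentSeries ℂ) :=
    inv_eq_of_mul_eq_one_right hunit
  have hzpow : ((φ : PowerSeries ℂ) : LaurentSeries ℂ) ^ (-(k : ℤ))
      = HahnSeries.single (-(k : ℤ)) 1 * ((w ^ k : PowerSeries ℂ) : LaurentSeries ℂ) := by
    rw [zpow_neg, zpow_natCast, ← inv_pow, hinv, mul_pow, HahnSeries.single_pow,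
      PowerSeries.coe_pow]
    simp
  rw [hzpow]
  have hassoc : ((substInto φ g : PowerSeries ℂ) : LaurentSeries ℂ) *
        ((PowerSeries.derivative ℂ φ : PowerSeries ℂ) : LaurentSeries ℂ) *
        (HahnSeries.single (-(k : ℤ)) 1 * ((w ^ k : PowerSeries ℂ) : LaurentSeries ℂ))
      = (((substInto φ g * PowerSeries.derivative ℂ φ * w ^ k : PowerSeries ℂ)) :
          LaurentSeries ℂ) * HahnSeries.single (-(k : ℤ)) 1 := by
    rw [PowerSeries.coe_mul, PowerSeries.coe_mul]
    ring
  rw [hassoc, show (-1 : ℤ) = ((k - 1 : ℕ) : ℤ) + (-(k : ℤ)) from by omega,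
    HahnSeries.coeff_mul_single_add, mul_one, LaurentSeries.coeff_coe_powerSeries]
  exact Stmt9Aux.main_ps φ ψ w g hφ hw k hk
end

section
/- Let q be a polynomial with complex coefficients, let k ≥ 1 be an integer, and let E ∈ ℂ⟦x⟧ denote the formal power series Σ_{n≥0} (ix)^n / n! (the formal exponential of ix). Regard q(E), E, and (E − 1)^{−k} as elements of the field ℂ((x)) of formal Laurent series, noting that E − 1 is nonzero of order 1. Then the coefficient of x^{−1} in q(E) · i · E · (E − 1)^{−k} equals the coefficient of (X − 1)^{k−1} in the Taylor expansion of q about 1, i.e. q^{(k−1)}(1)/(k−1)!. -/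
noncomputable def expIX : PowerSeries ℂ :=
  PowerSeries.mk fun n => Complex.I ^ n / (n.factorial : ℂ)

noncomputable def vS : PowerSeries ℂ :=
  PowerSeries.mk fun n => Complex.I ^ (n + 1) / ((n + 1).factorial : ℂ)

lemma vS_const : PowerSeries.constantCoeff vS = Complex.I := by
  rw [← PowerSeries.coeff_zero_eq_constantCoeff]
  simp [vS]

lemma vS_mul_inv : vS * vS⁻¹ = 1 :=
  PowerSeries.mul_inv_cancel _ (by rw [vS_const]; exact Complex.I_ne_zero)

lemma expIX_eq : expIX = 1 + PowerSeries.X * vS := by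
  ext n
  cases n with
  | zero => simp [expIX, vS]
  | succ n => simp [expIX, vS, PowerSeries.coeff_succ_X_mul]

lemma deriv_expIX : PowerSeries.derivative ℂ expIX = Complex.I • expIX := by
  ext n
  rw [PowerSeries.coeff_derivative]
  simp only [expIX, PowerSeries.coeff_mk, map_smul, smul_eq_mul]
  have h1 : ((n + 1).factorial : ℂ) = (n + 1) * n.factorial := by
    push_cast [Nat.factorial_succ]; ring
  have h2 : ((n:ℂ) + 1) ≠ 0 := by exact_mod_cast Nat.succ_ne_zero n
  have h3 : (n.factorial : ℂ) ≠ 0 := by exact_mod_cast n.factorial_ne_zero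
  field_simp [h1]
  push_cast [Nat.factorial_succ, add_comm 1 n]
  ring

lemma IE_eq : (Complex.I • expIX : PowerSeries ℂ) =
    vS + PowerSeries.X * PowerSeries.derivative ℂ vS := by
  rw [← deriv_expIX, expIX_eq, map_add, Derivation.map_one_eq_zero, Derivation.leibniz,
    PowerSeries.derivative_X, smul_eq_mul, smul_eq_mul, mul_one, zero_add]
  ring

lemma lemA (m : ℕ) (hm : 1 ≤ m) :
    PowerSeries.coeff (m - 1) (vS⁻¹ ^ m * (Complex.I • expIX)) =
      if m = 1 then 1 else 0 := by
  obtain ⟨m, rfl⟩ : ∃ m', m = m' + 1 := ⟨m - 1, (Nat.succ_pred_eq_of_pos hm).symm⟩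
  rw [IE_eq]
  have hwv : vS⁻¹ ^ (m + 1) * vS = vS⁻¹ ^ m := by
    rw [pow_succ, mul_assoc, mul_comm vS⁻¹ vS, vS_mul_inv, mul_one]
  cases m with
  | zero =>
    have hinv : vS⁻¹ * vS = 1 := by rw [mul_comm]; exact vS_mul_inv
    have e1 : vS⁻¹ ^ (0 + 1) * (vS + PowerSeries.X * PowerSeries.derivative ℂ vS)
        = 1 + PowerSeries.X * (vS⁻¹ * PowerSeries.derivative ℂ vS) := by
      rw [pow_one, mul_add, hinv]; ring
    rw [e1, if_pos rfl]
    have : (0 + 1 - 1 : ℕ) = 0 := rfl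
    rw [this]
    simp [PowerSeries.coeff_zero_eq_constantCoeff]
  | succ n =>
    rw [if_neg (by omega)]
    have hsub : n + 1 + 1 - 1 = n + 1 := rfl
    rw [hsub, mul_add, hwv, map_add]
    set w := vS⁻¹ with hw
    set dv := PowerSeries.derivative ℂ vS with hdv
    set c := PowerSeries.coeff (n + 1) (w ^ (n + 1)) with hc
    have hdg : PowerSeries.derivative ℂ (w ^ (n + 1))
        = -((n + 1 : ℂ) • (w ^ (n + 2) * dv)) := by
      rw [Derivation.leibniz_pow, PowerSeries.derivative_inv', ← hw, ← hdv,
        Nat.add_sub_cancel]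
      simp only [nsmul_eq_mul, smul_eq_mul, Algebra.smul_def, map_add, map_natCast, map_one,
        eq_natCast, Nat.cast_add, Nat.cast_one]
      ring
    have key : ((n : ℂ) + 1) • (PowerSeries.X * (w ^ (n + 2) * dv) : PowerSeries ℂ)
        = -(PowerSeries.X * PowerSeries.derivative ℂ (w ^ (n + 1))) := by
      rw [hdg]
      simp only [Algebra.smul_def, map_add, map_natCast, map_one]
      ring
    have hXd : PowerSeries.coeff (n + 1) (PowerSeries.X * PowerSeries.derivative ℂ (w ^ (n+1)))
        = ((n : ℂ) + 1) * c := by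
      rw [PowerSeries.coeff_succ_X_mul, PowerSeries.coeff_derivative, hc]
      ring
    have harr : w ^ (n + 2) * (PowerSeries.X * dv) = PowerSeries.X * (w ^ (n + 2) * dv) := by
      ring
    have h2 : ((n : ℂ) + 1) * PowerSeries.coeff (n + 1) (PowerSeries.X * (w ^ (n + 2) * dv))
        = -(((n : ℂ) + 1) * c) := by
      have := congrArg (PowerSeries.coeff (n + 1)) key
      rw [map_smul, smul_eq_mul, map_neg, hXd] at this
      linear_combination this
    have hne : ((n : ℂ) + 1) ≠ 0 := by exact_mod_cast Nat.succ_ne_zero n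
    have h3 : PowerSeries.coeff (n + 1) (PowerSeries.X * (w ^ (n + 2) * dv)) = -c := by
      exact mul_left_cancel₀ hne (by linear_combination h2)
    rw [harr, h3]
    ring

open HahnSeries PowerSeries

lemma expIX_sub_one :
    ((expIX : PowerSeries ℂ) : LaurentSeries ℂ) - 1
      = HahnSeries.single (1 : ℤ) 1 * ((vS : PowerSeries ℂ) : LaurentSeries ℂ) := by
  rw [← PowerSeries.coe_one, ← PowerSeries.coe_sub, ← PowerSeries.coe_X,
    ← PowerSeries.coe_mul]
  congr 1
  rw [expIX_eq]
  ring

lemma pow_neg_eq (k : ℕ) :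
    (((expIX : PowerSeries ℂ) : LaurentSeries ℂ) - 1) ^ (-(k : ℤ))
      = HahnSeries.single (-(k : ℤ)) 1 * (((vS⁻¹ ^ k : PowerSeries ℂ)) : LaurentSeries ℂ) := by
  rw [zpow_neg, zpow_natCast, expIX_sub_one]
  refine inv_eq_of_mul_eq_one_right ?_
  rw [mul_pow, HahnSeries.single_pow, one_pow, ← PowerSeries.coe_pow,
    mul_mul_mul_comm, HahnSeries.single_mul_single, one_mul, ← PowerSeries.coe_mul]
  have h1 : (vS ^ k) * (vS⁻¹ ^ k) = 1 := by rw [← mul_pow, vS_mul_inv, one_pow]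
  have h2 : k • (1 : ℤ) + (-(k : ℤ)) = 0 := by simp
  rw [h1, h2, PowerSeries.coe_one, HahnSeries.single_zero_one, mul_one]

lemma term_coeff (k i : ℕ) (hk : 1 ≤ k) (a : ℂ) :
    PowerSeries.coeff (k - 1)
      ((Polynomial.aeval expIX) (Polynomial.C a * (Polynomial.X - Polynomial.C 1) ^ i) *
        (Complex.I • expIX) * vS⁻¹ ^ k) = if i = k - 1 then a else 0 := by
  have haev : (Polynomial.aeval expIX) (Polynomial.C a * (Polynomial.X - Polynomial.C 1) ^ i)
      = PowerSeries.C a * (PowerSeries.X * vS) ^ i := by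
    simp only [map_mul, map_pow, map_sub, Polynomial.aeval_X, Polynomial.aeval_C,
      PowerSeries.algebraMap_apply, Algebra.algebraMap_self_apply, map_one, expIX_eq]
    ring
  rw [haev]
  have harr : PowerSeries.C a * (PowerSeries.X * vS) ^ i * (Complex.I • expIX) * vS⁻¹ ^ k
      = PowerSeries.X ^ i * (PowerSeries.C a * (vS ^ i * vS⁻¹ ^ k * (Complex.I • expIX))) := by
    rw [mul_pow]; ring
  rw [harr, PowerSeries.coeff_X_pow_mul']
  rcases le_or_gt i (k - 1) with h | h
  · rw [if_pos h, PowerSeries.coeff_C_mul]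
    have hvv : vS ^ i * vS⁻¹ ^ k * (Complex.I • expIX)
        = vS⁻¹ ^ (k - i) * (Complex.I • expIX) := by
      have hpw : vS⁻¹ ^ k = vS⁻¹ ^ i * vS⁻¹ ^ (k - i) := by
        rw [← _root_.pow_add]; congr 1; omega
      have hvi : vS ^ i * vS⁻¹ ^ i = 1 := by rw [← mul_pow, vS_mul_inv, one_pow]
      rw [hpw]
      linear_combination (vS⁻¹ ^ (k - i) * (Complex.I • expIX)) * hvi
    have hidx : k - 1 - i = k - i - 1 := by omega
    rw [hvv, hidx, lemA (k - i) (by omega)]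
    by_cases hik : i = k - 1
    · rw [if_pos hik, if_pos (by omega), mul_one]
    · rw [if_neg hik, if_neg (by omega), mul_zero]
  · rw [if_neg (by omega), if_neg (by omega)]

/-- For a polynomial `q` over `ℂ` and `k ≥ 1`, the coefficient of `x^(-1)`
in the formal Laurent series `q(E) · i · E · (E - 1)^(-k)`, where `E = ∑ (ix)^n/n!`, equals
the coefficient of `(X-1)^(k-1)` in the Taylor expansion of `q` about `1`,
i.e. `q^(k-1)(1)/(k-1)!`. -/
theorem stmt10 (q : Polynomial ℂ) (k : ℕ) (hk : 1 ≤ k) :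
    HahnSeries.coeff
      (((Polynomial.aeval expIX q : PowerSeries ℂ) : LaurentSeries ℂ) *
        (Complex.I • ((expIX : PowerSeries ℂ) : LaurentSeries ℂ)) *
        (((expIX : PowerSeries ℂ) : LaurentSeries ℂ) - 1) ^ (-(k : ℤ)))
      (-1) = (Polynomial.taylor 1 q).coeff (k - 1) := by
  rw [pow_neg_eq]
  have harr : ((Polynomial.aeval expIX q : PowerSeries ℂ) : LaurentSeries ℂ) *
        (Complex.I • ((expIX : PowerSeries ℂ) : LaurentSeries ℂ)) *
        (HahnSeries.single (-(k : ℤ)) 1 * (((vS⁻¹ ^ k : PowerSeries ℂ)) : LaurentSeries ℂ))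
      = HahnSeries.single (-(k : ℤ)) 1 *
        (((Polynomial.aeval expIX q * (Complex.I • expIX) * vS⁻¹ ^ k : PowerSeries ℂ)) :
          LaurentSeries ℂ) := by
    rw [PowerSeries.coe_mul, PowerSeries.coe_mul, PowerSeries.coe_smul]
    ring
  rw [harr, show (-1 : ℤ) = ((k : ℤ) - 1) + (-(k : ℤ)) by ring,
    HahnSeries.coeff_single_mul_add, one_mul, PowerSeries.coeff_coe,
    if_neg (by omega : ¬ ((k : ℤ) - 1) < 0), show ((k : ℤ) - 1).natAbs = k - 1 by omega]
  conv_lhs => rw [← Polynomial.sum_taylor_eq q 1]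
  rw [Polynomial.sum_def, map_sum, Finset.sum_mul, Finset.sum_mul, map_sum]
  have hterm : ∀ i ∈ (Polynomial.taylor 1 q).support,
      PowerSeries.coeff (k - 1)
        ((Polynomial.aeval expIX)
            (Polynomial.C ((Polynomial.taylor 1 q).coeff i) * (Polynomial.X - Polynomial.C 1) ^ i) *
          (Complex.I • expIX) * vS⁻¹ ^ k)
      = if i = k - 1 then (Polynomial.taylor 1 q).coeff i else 0 :=
    fun i _ => term_coeff k i hk _
  rw [Finset.sum_congr rfl hterm, Finset.sum_ite_eq' _ (k - 1)]
  by_cases hmem : k - 1 ∈ (Polynomial.taylor 1 q).support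
  · rw [if_pos hmem]
  · rw [if_neg hmem, eq_comm, Polynomial.notMem_support_iff.mp hmem]
end
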